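/- Let n ≥ 1 be an integer, let A be a positive definite Hermitian n×n complex matrix, and let v ∈ ℂⁿ. Then ‖v‖² ≤ Re(tr A) · Re(v* A⁻¹ v), where ‖v‖² = Σᵢ |vᵢ|². (This is the pointwise linear-algebra inequality, verified in normal coordinates, underlying Lemma 3.5: (ω_u ∧ ω^{n-1}/ω^n)·(ω_u^{n-1} ∧ dψ∧d^cψ/ω^n) ≥ (1/n)(ω_u^n/ω^n)·(dψ∧d^cψ∧ω^{n-1}/ω^n).) -/

import Mathlib

open scoped ComplexOrder

open Matrix Finset in
private lemma aux_sum_2 {n : ℕ} (l x : Fin n → ℝ) (hl : ∀ i, 0 < l i) (hx : ∀ i, 0 ≤ x i) :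
    ∑ i, x i ≤ (∑ i, l i) * (∑ i, x i / l i) := by
  rw [Finset.sum_mul]
  refine Finset.sum_le_sum fun i _ => ?_
  have hq : x i / l i ≤ ∑ j, x j / l j :=
    Finset.single_le_sum (fun j _ => div_nonneg (hx j) (hl j).le) (Finset.mem_univ i)
  calc x i = l i * (x i / l i) := by rw [mul_comm, div_mul_cancel₀ _ (hl i).ne']
    _ ≤ l i * ∑ j, x j / l j := mul_le_mul_of_nonneg_left hq (hl i).le

/-- For a positive definite Hermitian `n×n` complex matrix `A` (`n ≥ 1`) and `v ∈ ℂⁿ`,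
`‖v‖² ≤ Re(tr A) · Re(v* A⁻¹ v)`. -/
theorem stmt_2 (n : ℕ) (hn : 1 ≤ n) (A : Matrix (Fin n) (Fin n) ℂ) (hA : A.PosDef)
    (v : Fin n → ℂ) :
    ∑ i, ‖v i‖ ^ 2
      ≤ A.trace.re * (dotProduct (star v) (A⁻¹.mulVec v)).re := by
  classical
  have hH := hA.1
  set U : Matrix (Fin n) (Fin n) ℂ := (Matrix.IsHermitian.eigenvectorUnitary hH : Matrix (Fin n) (Fin n) ℂ) with hU
  set lam : Fin n → ℝ := hH.eigenvalues with hlam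
  have hlpos : ∀ i, 0 < lam i := fun i => hA.eigenvalues_pos i
  set D : Matrix (Fin n) (Fin n) ℂ := Matrix.diagonal (fun i => (lam i : ℂ)) with hD
  set D' : Matrix (Fin n) (Fin n) ℂ := Matrix.diagonal (fun i => ((lam i : ℂ))⁻¹) with hD'
  have hspec : A = U * D * star U := by
    exact hH.spectral_theorem
  have hUU : U * star U = 1 := Matrix.mem_unitaryGroup_iff.mp
    (Matrix.IsHermitian.eigenvectorUnitary hH).2
  have hUU' : star U * U = 1 := Matrix.mem_unitaryGroup_iff'.mp
    (Matrix.IsHermitian.eigenvectorUnitary hH).2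
  have hDD' : D * D' = 1 := by
    rw [hD, hD', Matrix.diagonal_mul_diagonal]
    convert Matrix.diagonal_one
    exact mul_inv_cancel₀ (by exact_mod_cast (hlpos _).ne')
  have hAinv : A⁻¹ = U * D' * star U := by
    refine Matrix.inv_eq_right_inv ?_
    rw [hspec]
    calc U * D * star U * (U * D' * star U)
        = U * (D * (star U * U) * D') * star U := by noncomm_ring
      _ = 1 := by rw [hUU', Matrix.mul_one, hDD', Matrix.mul_one, hUU]
  set w : Fin n → ℂ := (star U).mulVec v with hw
  have key : ∀ B : Matrix (Fin n) (Fin n) ℂ,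
      dotProduct (star v) ((U * B * star U).mulVec v)
        = dotProduct (star w) (B.mulVec w) := by
    intro B
    rw [← Matrix.mulVec_mulVec, ← Matrix.mulVec_mulVec, Matrix.dotProduct_mulVec (star v)]
    congr 1
    rw [hw, Matrix.star_mulVec, Matrix.star_eq_conjTranspose, Matrix.conjTranspose_conjTranspose]
  -- trace
  have htr : A.trace = ∑ i, (lam i : ℂ) := by
    rw [hspec, Matrix.trace_mul_cycle, hUU', Matrix.one_mul, hD, Matrix.trace_diagonal]
  -- norm of v equals norm of w
  have hnorm : ∑ i, ‖v i‖ ^ 2 = ∑ i, Complex.normSq (w i) := by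
    have h1 : dotProduct (star v) v = dotProduct (star w) w := by
      have := key 1
      rw [Matrix.mul_one, hUU] at this
      simpa using this
    have h2 : dotProduct (star v) v = ∑ i, (Complex.normSq (v i) : ℂ) := by
      simp [dotProduct, Complex.normSq_eq_conj_mul_self]
    have h3 : dotProduct (star w) w = ∑ i, (Complex.normSq (w i) : ℂ) := by
      simp [dotProduct, Complex.normSq_eq_conj_mul_self]
    have h4 : (∑ i, (Complex.normSq (v i) : ℂ)) = ∑ i, (Complex.normSq (w i) : ℂ) := by
      rw [← h2, ← h3, h1]
    have h5 : (∑ i, Complex.normSq (v i)) = ∑ i, Complex.normSq (w i) := by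
      exact_mod_cast h4
    simpa [Complex.sq_norm] using h5
  -- quadratic form with D'
  have hquad : (dotProduct (star v) (A⁻¹.mulVec v)).re
      = ∑ i, Complex.normSq (w i) / lam i := by
    rw [hAinv, key D', hD']
    have : dotProduct (star w) ((Matrix.diagonal (fun i => ((lam i : ℂ))⁻¹)).mulVec w)
        = ∑ i, ((lam i : ℂ))⁻¹ * (Complex.normSq (w i) : ℂ) := by
      simp only [dotProduct, Matrix.mulVec_diagonal, Pi.star_apply, RCLike.star_def]
      refine Finset.sum_congr rfl fun i _ => ?_
      rw [Complex.normSq_eq_conj_mul_self]; ring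
    rw [this]
    push_cast [Complex.re_sum]
    refine Finset.sum_congr rfl fun i _ => ?_
    rw [← Complex.ofReal_inv, ← Complex.ofReal_mul, Complex.ofReal_re, div_eq_inv_mul]
  rw [hnorm, hquad, htr]
  have : (∑ i, (lam i : ℂ)).re = ∑ i, lam i := by
    push_cast [Complex.re_sum]; rfl
  rw [this]
  exact aux_sum_2 lam (fun i => Complex.normSq (w i)) hlpos (fun i => Complex.normSq_nonneg _)
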